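/- Let n ≥ 3 be odd and let G = D_n be the dihedral group of order 2n. Then Q(G) = H(G). -/

import Mathlib

open Equiv Pointwise

/-- A subgroup `N ≤ Perm X` is regular if for all `x y : X` there is exactly one
element of `N` sending `x` to `y`. -/
def IsRegularSubgroup {X : Type*} (N : Subgroup (Equiv.Perm X)) : Prop :=
  ∀ x y : X, ∃! η : N, (η : Equiv.Perm X) x = y

/-- The image `λ(G)` of the left regular representation `λ : G → Perm G`. -/
def lamG (G : Type*) [Group G] : Subgroup (Equiv.Perm G) :=
  (MulAction.toPermHom G G).range

/-- The holomorph `Hol(G) = Norm_B(λ(G))`. -/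
def Hol (G : Type*) [Group G] : Subgroup (Equiv.Perm G) :=
  Subgroup.normalizer (lamG G : Set (Equiv.Perm G))

/-- `H(G)`: regular subgroups isomorphic to `G` whose normalizer is `Hol(G)`. -/
def HClass (G : Type*) [Group G] : Set (Subgroup (Equiv.Perm G)) :=
  {N | IsRegularSubgroup N ∧ Nonempty (N ≃* G) ∧ Subgroup.normalizer (N : Set (Equiv.Perm G)) = Hol G}

/-- `S(G)`: regular subgroups isomorphic to `G` contained in `Hol(G)`. -/
def SClass (G : Type*) [Group G] : Set (Subgroup (Equiv.Perm G)) :=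
  {N | IsRegularSubgroup N ∧ Nonempty (N ≃* G) ∧ N ≤ Hol G}

/-- `R(G)`: regular subgroups isomorphic to `G` normalized by `λ(G)`. -/
def RClass (G : Type*) [Group G] : Set (Subgroup (Equiv.Perm G)) :=
  {N | IsRegularSubgroup N ∧ Nonempty (N ≃* G) ∧ lamG G ≤ Subgroup.normalizer (N : Set (Equiv.Perm G))}

/-- `Q(G)`: members of `S(G) ∩ R(G)` normalized by every member of `S(G) ∩ R(G)`. -/
def QClass (G : Type*) [Group G] : Set (Subgroup (Equiv.Perm G)) :=
  {M ∈ SClass G ∩ RClass G | ∀ N ∈ SClass G ∩ RClass G, N ≤ Subgroup.normalizer (M : Set (Equiv.Perm G))}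

/-- Conjugate of a subgroup: `b N b⁻¹`. -/
def conjSub {H : Type*} [Group H] (b : H) (N : Subgroup H) : Subgroup H :=
  Subgroup.map (MulAut.conj b).toMonoidHom N

namespace QHAux

variable {n : ℕ}

open DihedralGroup

abbrev lam : DihedralGroup n →* Equiv.Perm (DihedralGroup n) := MulAction.toPermHom _ _

@[simp] lemma lam_apply (g z : DihedralGroup n) : lam g z = g * z := rfl

@[simp] lemma lam_inv_apply (g z : DihedralGroup n) : (lam g)⁻¹ z = g⁻¹ * z := by
  rw [← map_inv]; rfl

def rho : DihedralGroup n →* Equiv.Perm (DihedralGroup n) where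
  toFun u := Equiv.mulRight u⁻¹
  map_one' := by ext z; simp
  map_mul' u v := by ext z; simp [mul_assoc]

@[simp] lemma rho_apply (u z : DihedralGroup n) : rho u z = z * u⁻¹ := rfl

@[simp] lemma rho_inv_apply (u z : DihedralGroup n) : (rho u)⁻¹ z = z * u := by
  rw [← map_inv]; simp [rho]

lemma lam_mem (g : DihedralGroup n) : lam g ∈ lamG (DihedralGroup n) := ⟨g, rfl⟩

lemma lamG_le_Hol : lamG (DihedralGroup n) ≤ Hol (DihedralGroup n) := Subgroup.le_normalizer

lemma lam_rho_comm (g u : DihedralGroup n) : lam g * rho u = rho u * lam g := by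
  ext z; simp [Equiv.Perm.mul_apply, mul_assoc]

lemma conj_rho_lam (u g : DihedralGroup n) : rho u * lam g * (rho u)⁻¹ = lam g := by
  rw [← lam_rho_comm, mul_inv_cancel_right]

lemma conj_lam_rho (g u : DihedralGroup n) : lam g * rho u * (lam g)⁻¹ = rho u := by
  rw [lam_rho_comm, mul_inv_cancel_right]

lemma rho_mem_Hol (u : DihedralGroup n) : rho u ∈ Hol (DihedralGroup n) := by
  rw [Hol, Subgroup.mem_normalizer_iff]
  intro h
  constructor
  · rintro ⟨g, rfl⟩
    exact ⟨g, (conj_rho_lam u g).symm⟩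
  · rintro ⟨g, hg⟩
    have hg' : lam g = rho u * h * (rho u)⁻¹ := hg
    have h2 : rho u * h * (rho u)⁻¹ = rho u * lam g * (rho u)⁻¹ := by
      rw [conj_rho_lam]; exact hg'.symm
    have h3 : h = lam g := mul_left_cancel (mul_right_cancel h2)
    exact h3 ▸ lam_mem g

/-- An element of the holomorph fixing `1` is multiplicative. -/
lemma hol_fix_one_mul {f : Equiv.Perm (DihedralGroup n)} (hf : f ∈ Hol (DihedralGroup n))
    (h1 : f 1 = 1) (a b : DihedralGroup n) : f (a * b) = f a * f b := by
  have hinv1 : f⁻¹ 1 = 1 := by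
    have : f⁻¹ (f 1) = 1 := by simp
    rwa [h1] at this
  obtain ⟨c, hc⟩ := (Subgroup.mem_normalizer_iff.mp hf (lam a)).mp (lam_mem a)
  have hc' : (lam c : Equiv.Perm (DihedralGroup n)) = f * lam a * f⁻¹ := hc
  have e1 := Equiv.ext_iff.mp hc' 1
  simp only [lam_apply, Equiv.Perm.mul_apply, mul_one, hinv1] at e1
  have e2 := Equiv.ext_iff.mp hc' (f b)
  simp only [lam_apply, Equiv.Perm.mul_apply, Equiv.Perm.inv_def, Equiv.symm_apply_apply] at e2
  rw [e1] at e2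
  exact e2.symm

lemma r_pow (k : ℕ) (v : ZMod n) : (r v) ^ k = r ((k : ZMod n) * v) := by
  induction k with
  | zero => rw [pow_zero, Nat.cast_zero, zero_mul, ← DihedralGroup.one_def]
  | succ k ih =>
    rw [pow_succ, ih, r_mul_r]
    congr 1
    push_cast
    ring

/-- Any multiplicative permutation of `DihedralGroup n` (for `n ≥ 3` odd) has the standard
affine form. -/
lemma mul_perm_form (hn : 3 ≤ n) (hodd : Odd n) {f : Equiv.Perm (DihedralGroup n)}
    (hf : ∀ a b, f (a * b) = f a * f b) :
    ∃ c d : ZMod n, (∀ j, f (r j) = r (c * j)) ∧ (∀ i, f (sr i) = sr (d + c * i)) := by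
  haveI : NeZero n := ⟨by omega⟩
  let e : DihedralGroup n ≃* DihedralGroup n := { toEquiv := f, map_mul' := hf }
  have horder : ∀ x : DihedralGroup n, orderOf (f x) = orderOf x := fun x =>
    orderOf_injective e.toMonoidHom e.injective x
  obtain ⟨c, hc⟩ : ∃ c, f (r 1) = r c := by
    cases hx : f (r 1) with
    | r c => exact ⟨c, rfl⟩
    | sr c =>
      have := horder (r 1)
      rw [hx, orderOf_sr, orderOf_r_one] at this
      omega
  have hr : ∀ j, f (r j) = r (c * j) := by
    have hnat : ∀ k : ℕ, f (r (k : ZMod n)) = r (c * (k : ZMod n)) := by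
      intro k
      have : f ((r 1 : DihedralGroup n) ^ k) = (f (r 1)) ^ k := map_pow e _ k
      rw [r_one_pow, hc, r_pow] at this
      rw [this]
      congr 1
      ring
    intro j
    have := hnat j.val
    rwa [ZMod.natCast_zmod_val] at this
  obtain ⟨d, hd0⟩ : ∃ d, f (sr 0) = sr d := by
    cases hx : f (sr 0) with
    | r b =>
      exfalso
      have h2 : orderOf (f (sr 0)) = 2 := by rw [horder, orderOf_sr]
      have hb2 : (f (sr 0)) ^ 2 = 1 := by rw [← h2]; exact pow_orderOf_eq_one _
      rw [hx, pow_two, r_mul_r, DihedralGroup.one_def] at hb2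
      have hb0 : b = 0 := (ZMod.add_self_eq_zero_iff_eq_zero hodd).mp (r.inj hb2)
      rw [hx, hb0, ← DihedralGroup.one_def, orderOf_one] at h2
      omega
    | sr d => exact ⟨d, rfl⟩
  refine ⟨c, d, hr, fun i => ?_⟩
  have : f (sr 0 * r i) = f (sr 0) * f (r i) := hf _ _
  rw [sr_mul_r, zero_add, hd0, hr, sr_mul_r] at this
  exact this

lemma rho_injective : Function.Injective (rho (n := n)) := by
  intro u v h
  have := Equiv.ext_iff.mp h 1
  simp only [rho_apply, one_mul] at this
  exact inv_injective this

lemma rho_range_regular : IsRegularSubgroup (rho (n := n)).range := by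
  intro x y
  refine ⟨⟨rho (y⁻¹ * x), ⟨_, rfl⟩⟩, by show rho (y⁻¹ * x) x = y; rw [rho_apply]; group, ?_⟩
  rintro ⟨p, hp⟩ hpx
  obtain ⟨w, rfl⟩ := hp
  have hx : rho w x = y := hpx
  have hw : w = y⁻¹ * x := by
    have h1 : x * w⁻¹ = y := hx
    rw [← h1]
    group
  exact Subtype.ext (by rw [hw])

lemma rho_range_le_Hol : (rho (n := n)).range ≤ Hol (DihedralGroup n) := by
  rintro p ⟨u, rfl⟩
  exact rho_mem_Hol u

lemma lamG_le_norm_rho_range :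
    lamG (DihedralGroup n) ≤ Subgroup.normalizer ((rho (n := n)).range : Set (Equiv.Perm (DihedralGroup n))) := by
  rintro p ⟨g, rfl⟩
  have hp : (MulAction.toPermHom _ _ : _ →* Equiv.Perm (DihedralGroup n)) g = lam g := rfl
  rw [hp, Subgroup.mem_normalizer_iff]
  intro h
  constructor
  · rintro ⟨u, rfl⟩
    exact ⟨u, (conj_lam_rho g u).symm⟩
  · rintro ⟨u, hu⟩
    have hu' : rho u = lam g * h * (lam g)⁻¹ := hu
    have h2 : lam g * h * (lam g)⁻¹ = lam g * rho u * (lam g)⁻¹ := by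
      rw [conj_lam_rho]; exact hu'.symm
    have h3 : h = rho u := mul_left_cancel (mul_right_cancel h2)
    exact h3 ▸ ⟨u, rfl⟩

/-- Conjugation by an element of the normalizer, as an automorphism of `M`. -/
def conjAut {G : Type*} [Group G] {M : Subgroup G} (ψ : G) (hψ : ψ ∈ Subgroup.normalizer (M : Set G)) :
    MulAut ↥M where
  toFun m := ⟨ψ * m * ψ⁻¹, (Subgroup.mem_normalizer_iff.mp hψ m).mp m.2⟩
  invFun m := ⟨ψ⁻¹ * m * ψ, (Subgroup.mem_normalizer_iff''.mp hψ (m : G)).mp m.2⟩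
  left_inv m := by
    apply Subtype.ext
    simp only []
    group
  right_inv m := by
    apply Subtype.ext
    simp only []
    group
  map_mul' a b := by
    apply Subtype.ext
    simp only [Subgroup.coe_mul]
    group

@[simp] lemma conjAut_coe {G : Type*} [Group G] {M : Subgroup G} (ψ : G)
    (hψ : ψ ∈ Subgroup.normalizer (M : Set G)) (m : ↥M) :
    (conjAut ψ hψ m : G) = ψ * m * ψ⁻¹ := rfl

/-- Transport of `MulAut` along a `MulEquiv`. -/
def mulAutCongr {A B : Type*} [Group A] [Group B] (e : A ≃* B) : MulAut A ≃ MulAut B where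
  toFun φ := (e.symm.trans φ).trans e
  invFun φ := (e.trans φ).trans e.symm
  left_inv φ := by ext x; simp
  right_inv φ := by ext x; simp

lemma aut_perm_conj (φ : MulAut (DihedralGroup n)) (u : DihedralGroup n) :
    (φ : Equiv.Perm (DihedralGroup n)) * lam u * (φ : Equiv.Perm (DihedralGroup n))⁻¹
      = lam (φ u) := by
  ext z
  simp [Equiv.Perm.mul_apply, Equiv.Perm.inv_def]

lemma aut_perm_mem_Hol (φ : MulAut (DihedralGroup n)) :
    (φ : Equiv.Perm (DihedralGroup n)) ∈ Hol (DihedralGroup n) := by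
  rw [Hol, Subgroup.mem_normalizer_iff]
  intro h
  constructor
  · rintro ⟨u, rfl⟩
    exact ⟨φ u, (aut_perm_conj φ u).symm⟩
  · rintro ⟨u, hu⟩
    have hu' : lam u = (φ : Equiv.Perm (DihedralGroup n)) * h *
        (φ : Equiv.Perm (DihedralGroup n))⁻¹ := hu
    have h2 : (φ : Equiv.Perm (DihedralGroup n)) * h * (φ : Equiv.Perm (DihedralGroup n))⁻¹
        = (φ : Equiv.Perm (DihedralGroup n)) * lam (φ.symm u) *
          (φ : Equiv.Perm (DihedralGroup n))⁻¹ := by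
      rw [aut_perm_conj]
      rw [← hu']
      congr 1
      exact (φ.apply_symm_apply u).symm
    have h3 : h = lam (φ.symm u) := mul_left_cancel (mul_right_cancel h2)
    exact h3 ▸ lam_mem _

@[simp] lemma r_inv (i : ZMod n) : (r i : DihedralGroup n)⁻¹ = r (-i) := rfl

@[simp] lemma sr_inv (i : ZMod n) : (sr i : DihedralGroup n)⁻¹ = sr i := rfl

theorem main_norm_eq (hn : 3 ≤ n) (hodd : Odd n)
    (M : Subgroup (Equiv.Perm (DihedralGroup n)))
    (hreg : IsRegularSubgroup M)
    (hiso : Nonempty (↥M ≃* DihedralGroup n))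
    (hS : M ≤ Hol (DihedralGroup n))
    (hlam : ∀ g, lam g ∈ Subgroup.normalizer (M : Set (Equiv.Perm (DihedralGroup n))))
    (hrho : ∀ u, rho u ∈ Subgroup.normalizer (M : Set (Equiv.Perm (DihedralGroup n)))) :
    Subgroup.normalizer (M : Set (Equiv.Perm (DihedralGroup n))) = Hol (DihedralGroup n) := by
  haveI : NeZero n := ⟨by omega⟩
  classical
  -- the canonical elements of M
  have hex : ∀ g : DihedralGroup n, ∃ p : ↥M, (p : Equiv.Perm (DihedralGroup n)) 1 = g :=
    fun g => (hreg 1 g).exists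
  choose eta heta using hex
  have heta_uniq : ∀ p : Equiv.Perm (DihedralGroup n), p ∈ M →
      p = (eta (p 1) : Equiv.Perm (DihedralGroup n)) := by
    intro p hp
    obtain ⟨y, hy1, hu⟩ := hreg 1 (p 1)
    have h1 := hu ⟨p, hp⟩ rfl
    have h2 := hu (eta (p 1)) (heta _)
    exact congrArg Subtype.val (h1.trans h2.symm)
  -- the translation parts
  set gam : DihedralGroup n → Equiv.Perm (DihedralGroup n) :=
    fun g => (lam g)⁻¹ * (eta g : Equiv.Perm (DihedralGroup n)) with hgamdef
  have heta_eq : ∀ g, (eta g : Equiv.Perm (DihedralGroup n)) = lam g * gam g := by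
    intro g; rw [hgamdef]; group
  have heta_app : ∀ g z, (eta g : Equiv.Perm (DihedralGroup n)) z = g * gam g z := by
    intro g z; rw [heta_eq g]; simp [Equiv.Perm.mul_apply]
  have hgam1 : ∀ g, gam g 1 = 1 := by
    intro g
    show ((lam g)⁻¹ * (eta g : Equiv.Perm (DihedralGroup n))) 1 = 1
    rw [Equiv.Perm.mul_apply, heta g, lam_inv_apply, inv_mul_cancel]
  have hgamHol : ∀ g, gam g ∈ Hol (DihedralGroup n) :=
    fun g => mul_mem (inv_mem (lamG_le_Hol (lam_mem g))) (hS (eta g).2)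
  have hgammul : ∀ g a b, gam g (a * b) = gam g a * gam g b :=
    fun g => hol_fix_one_mul (hgamHol g) (hgam1 g)
  have hgaminv : ∀ g x, gam g x⁻¹ = (gam g x)⁻¹ := by
    intro g x
    have h := hgammul g x⁻¹ x
    rw [inv_mul_cancel, hgam1] at h
    exact eq_inv_of_mul_eq_one_left h.symm
  -- the affine form of each `gam g`
  have hform := fun g => mul_perm_form hn hodd (hgammul g)
  choose c d hc hd using hform
  -- conjugation identities
  have idB : ∀ g x, lam x * (eta g : Equiv.Perm (DihedralGroup n)) * (lam x)⁻¹ =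
      lam (x * g * (gam g x)⁻¹ * g⁻¹) * (eta g : Equiv.Perm (DihedralGroup n)) := by
    intro g x
    ext z
    simp only [Equiv.Perm.mul_apply, lam_apply, lam_inv_apply, heta_app, hgammul, hgaminv]
    group
  have memB : ∀ g x, lam (x * g * (gam g x)⁻¹ * g⁻¹) ∈ M := by
    intro g x
    have h1 : lam x * (eta g : Equiv.Perm (DihedralGroup n)) * (lam x)⁻¹ ∈ M :=
      (Subgroup.mem_normalizer_iff.mp (hlam x) _).mp (eta g).2
    have h2 := mul_mem h1 (inv_mem (eta g).2)
    have heq : lam (x * g * (gam g x)⁻¹ * g⁻¹) =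
        (lam x * (eta g : Equiv.Perm (DihedralGroup n)) * (lam x)⁻¹) *
          ((eta g : Equiv.Perm (DihedralGroup n)))⁻¹ := by
      rw [idB g x]; group
    exact heq ▸ h2
  have idA : ∀ g x, rho x * (eta g : Equiv.Perm (DihedralGroup n)) * (rho x)⁻¹ =
      rho (x * (gam g x)⁻¹) * (eta g : Equiv.Perm (DihedralGroup n)) := by
    intro g x
    ext z
    simp only [Equiv.Perm.mul_apply, rho_apply, rho_inv_apply, heta_app, hgammul, mul_inv_rev,
      inv_inv]
    group
  have memA : ∀ g x, rho (x * (gam g x)⁻¹) ∈ M := by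
    intro g x
    have h1 : rho x * (eta g : Equiv.Perm (DihedralGroup n)) * (rho x)⁻¹ ∈ M :=
      (Subgroup.mem_normalizer_iff.mp (hrho x) _).mp (eta g).2
    have h2 := mul_mem h1 (inv_mem (eta g).2)
    have heq : rho (x * (gam g x)⁻¹) =
        (rho x * (eta g : Equiv.Perm (DihedralGroup n)) * (rho x)⁻¹) *
          ((eta g : Equiv.Perm (DihedralGroup n)))⁻¹ := by
      rw [idA g x]; group
    exact heq ▸ h2
  -- closure properties of the two "ideals"
  have hIadd : ∀ v w : ZMod n, lam (r v) ∈ M → lam (r w) ∈ M → lam (r (v + w)) ∈ M := by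
    intro v w hv hw
    have : lam (r (v + w)) = lam (r v) * lam (r w) := by
      rw [← map_mul, r_mul_r]
    rw [this]; exact mul_mem hv hw
  have hIneg : ∀ v : ZMod n, lam (r v) ∈ M → lam (r (-v)) ∈ M := by
    intro v hv
    have : lam (r (-v)) = (lam (r v))⁻¹ := by rw [← map_inv, r_inv]
    rw [this]; exact inv_mem hv
  have hIsmul : ∀ t v : ZMod n, lam (r v) ∈ M → lam (r (t * v)) ∈ M := by
    intro t v hv
    have : (r (t * v) : DihedralGroup n) = (r v) ^ t.val := by
      rw [r_pow, ZMod.natCast_zmod_val]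
    rw [this, map_pow]; exact pow_mem hv _
  have hI'add : ∀ v w : ZMod n, rho (r v) ∈ M → rho (r w) ∈ M → rho (r (v + w)) ∈ M := by
    intro v w hv hw
    have : rho (r (v + w)) = rho (r v) * rho (r w) := by rw [← map_mul, r_mul_r]
    rw [this]; exact mul_mem hv hw
  have hI'neg : ∀ v : ZMod n, rho (r v) ∈ M → rho (r (-v)) ∈ M := by
    intro v hv
    have : rho (r (-v)) = (rho (r v))⁻¹ := by rw [← map_inv, r_inv]
    rw [this]; exact inv_mem hv
  have hI'smul : ∀ t v : ZMod n, rho (r v) ∈ M → rho (r (t * v)) ∈ M := by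
    intro t v hv
    have : (r (t * v) : DihedralGroup n) = (r v) ^ t.val := by
      rw [r_pow, ZMod.natCast_zmod_val]
    rw [this, map_pow]; exact pow_mem hv _
  -- intersection is trivial
  have hcap : ∀ v : ZMod n, lam (r v) ∈ M → rho (r v) ∈ M → v = 0 := by
    intro v h1 h2
    have h3 : (rho (r v))⁻¹ ∈ M := inv_mem h2
    have u1 := heta_uniq _ h1
    have u2 := heta_uniq _ h3
    have e1 : (lam (r v) : Equiv.Perm (DihedralGroup n)) 1 = r v := by simp
    have e2 : ((rho (r v))⁻¹ : Equiv.Perm (DihedralGroup n)) 1 = r v := by simp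
    rw [e1] at u1
    rw [e2] at u2
    have heq : (lam (r v) : Equiv.Perm (DihedralGroup n)) = (rho (r v))⁻¹ :=
      u1.trans u2.symm
    have := Equiv.ext_iff.mp heq (sr 0)
    simp only [lam_apply, rho_inv_apply, r_mul_sr, sr_mul_r, zero_sub, zero_add] at this
    have hvv : v + v = 0 := by
      have h4 : -v = v := sr.inj this
      linear_combination -h4
    exact (ZMod.add_self_eq_zero_iff_eq_zero hodd).mp hvv
  -- numeric membership facts
  have B1r : ∀ m : ZMod n, lam (r (1 - c (r m))) ∈ M := by
    intro m
    have h := memB (r m) (r 1)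
    have harg : (r 1 : DihedralGroup n) * r m * (gam (r m) (r 1))⁻¹ * (r m)⁻¹
        = r (1 - c (r m)) := by
      rw [hc (r m) 1]
      simp only [r_inv, r_mul_r]
      congr 1; ring
    rwa [harg] at h
  have A1r : ∀ m : ZMod n, rho (r (1 - c (r m))) ∈ M := by
    intro m
    have h := memA (r m) (r 1)
    have harg : (r 1 : DihedralGroup n) * (gam (r m) (r 1))⁻¹ = r (1 - c (r m)) := by
      rw [hc (r m) 1]
      simp only [r_inv, r_mul_r]
      congr 1; ring
    rwa [harg] at h
  have B2r : ∀ m : ZMod n, lam (r (d (r m) - 2 * m)) ∈ M := by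
    intro m
    have h := memB (r m) (sr 0)
    have harg : (sr 0 : DihedralGroup n) * r m * (gam (r m) (sr 0))⁻¹ * (r m)⁻¹
        = r (d (r m) - 2 * m) := by
      rw [hd (r m) 0]
      simp only [sr_inv, r_inv, sr_mul_r, sr_mul_sr, r_mul_r]
      congr 1; ring
    rwa [harg] at h
  have A2r : ∀ m : ZMod n, rho (r (d (r m))) ∈ M := by
    intro m
    have h := memA (r m) (sr 0)
    have harg : (sr 0 : DihedralGroup n) * (gam (r m) (sr 0))⁻¹ = r (d (r m)) := by
      rw [hd (r m) 0]
      simp only [sr_inv, sr_mul_sr]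
      congr 1; ring
    rwa [harg] at h
  have B1s : ∀ m : ZMod n, lam (r (1 + c (sr m))) ∈ M := by
    intro m
    have h := memB (sr m) (r 1)
    have harg : (r 1 : DihedralGroup n) * sr m * (gam (sr m) (r 1))⁻¹ * (sr m)⁻¹
        = r (1 + c (sr m)) := by
      rw [hc (sr m) 1]
      simp only [r_inv, sr_inv, r_mul_sr, sr_mul_r, sr_mul_sr]
      congr 1; ring
    rwa [harg] at h
  have A1s : ∀ m : ZMod n, rho (r (1 - c (sr m))) ∈ M := by
    intro m
    have h := memA (sr m) (r 1)
    have harg : (r 1 : DihedralGroup n) * (gam (sr m) (r 1))⁻¹ = r (1 - c (sr m)) := by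
      rw [hc (sr m) 1]
      simp only [r_inv, r_mul_r]
      congr 1; ring
    rwa [harg] at h
  have B2s : ∀ m : ZMod n, lam (r (2 * m - d (sr m))) ∈ M := by
    intro m
    have h := memB (sr m) (sr 0)
    have harg : (sr 0 : DihedralGroup n) * sr m * (gam (sr m) (sr 0))⁻¹ * (sr m)⁻¹
        = r (2 * m - d (sr m)) := by
      rw [hd (sr m) 0]
      simp only [sr_inv, sr_mul_sr, r_mul_sr]
      congr 1; ring
    rwa [harg] at h
  have A2s : ∀ m : ZMod n, rho (r (d (sr m))) ∈ M := by
    intro m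
    have h := memA (sr m) (sr 0)
    have harg : (sr 0 : DihedralGroup n) * (gam (sr m) (sr 0))⁻¹ = r (d (sr m)) := by
      rw [hd (sr m) 0]
      simp only [sr_inv, sr_mul_sr]
      congr 1; ring
    rwa [harg] at h
  -- construct the idempotent-type element a
  have h2unit : IsUnit (2 : ZMod n) := by
    have h2 : ((2 : ℕ) : ZMod n) = (2 : ZMod n) := by norm_cast
    rw [← h2, ZMod.isUnit_iff_coprime]
    exact Nat.prime_two.coprime_iff_not_dvd.mpr hodd.not_two_dvd_nat
  obtain ⟨t, ht⟩ := h2unit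
  set u : ZMod n := (↑t⁻¹ : ZMod n) * (1 + c (sr 0)) with hu_def
  set u' : ZMod n := (↑t⁻¹ : ZMod n) * (1 - c (sr 0)) with hu'_def
  have hu : lam (r u) ∈ M := hIsmul _ _ (B1s 0)
  have hu' : rho (r u') ∈ M := hI'smul _ _ (A1s 0)
  have hsum : u + u' = 1 := by
    have h1 : u + u' = (↑t⁻¹ : ZMod n) * 2 := by rw [hu_def, hu'_def]; ring
    rw [h1, ← ht, ← Units.val_mul, inv_mul_cancel, Units.val_one]
  have huu0 : u * u' = 0 := by
    have hmem1 : lam (r (u * u')) ∈ M := by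
      rw [mul_comm]; exact hIsmul u' u hu
    have hmem2 : rho (r (u * u')) ∈ M := hI'smul u u' hu'
    exact hcap _ hmem1 hmem2
  have hu2 : u * u = u := by
    have hu'1 : u' = 1 - u := by linear_combination hsum
    rw [hu'1] at huu0
    linear_combination -huu0
  set a : ZMod n := 2 * u - 1 with ha_def
  have ha_p : lam (r (a + 1)) ∈ M := by
    have h := hIsmul 2 u hu
    have : a + 1 = 2 * u := by rw [ha_def]; ring
    rwa [this]
  have ha_m : rho (r (a - 1)) ∈ M := by
    have h := hI'smul 2 u' hu'
    have h2 := hI'neg _ h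
    have hu'1 : u' = 1 - u := by linear_combination hsum
    have : a - 1 = -(2 * u') := by rw [ha_def, hu'1]; ring
    rwa [this]
  have ha2 : a * a = 1 := by
    rw [ha_def]
    linear_combination 4 * hu2
  -- determine the coefficients
  have hcr : ∀ m : ZMod n, c (r m) = 1 := by
    intro m
    have h0 := hcap _ (B1r m) (A1r m)
    linear_combination -h0
  have hcs : ∀ m : ZMod n, c (sr m) = a := by
    intro m
    have hmem1 : lam (r (a - c (sr m))) ∈ M := by
      have h := hIadd _ _ ha_p (hIneg _ (B1s m))
      have harg : (a + 1) + -(1 + c (sr m)) = a - c (sr m) := by ring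
      rwa [harg] at h
    have hmem2 : rho (r (a - c (sr m))) ∈ M := by
      have h := hI'add _ _ ha_m (A1s m)
      have harg : (a - 1) + (1 - c (sr m)) = a - c (sr m) := by ring
      rwa [harg] at h
    have h0 := hcap _ hmem1 hmem2
    linear_combination -h0
  have hdr : ∀ m : ZMod n, d (r m) = (1 - a) * m := by
    intro m
    have hmem1 : lam (r (d (r m) - (1 - a) * m)) ∈ M := by
      have h := hIadd _ _ (B2r m) (hIsmul m _ ha_p)
      have harg : (d (r m) - 2 * m) + m * (a + 1) = d (r m) - (1 - a) * m := by ring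
      rwa [harg] at h
    have hmem2 : rho (r (d (r m) - (1 - a) * m)) ∈ M := by
      have h := hI'add _ _ (A2r m) (hI'smul m _ ha_m)
      have harg : d (r m) + m * (a - 1) = d (r m) - (1 - a) * m := by ring
      rwa [harg] at h
    have h0 := hcap _ hmem1 hmem2
    linear_combination h0
  have hds : ∀ m : ZMod n, d (sr m) = (1 - a) * m := by
    intro m
    have hmem1 : lam (r (d (sr m) - (1 - a) * m)) ∈ M := by
      have h := hIadd _ _ (hIneg _ (B2s m)) (hIsmul m _ ha_p)
      have harg : -(2 * m - d (sr m)) + m * (a + 1) = d (sr m) - (1 - a) * m := by ring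
      rwa [harg] at h
    have hmem2 : rho (r (d (sr m) - (1 - a) * m)) ∈ M := by
      have h := hI'add _ _ (A2s m) (hI'smul m _ ha_m)
      have harg : d (sr m) + m * (a - 1) = d (sr m) - (1 - a) * m := by ring
      rwa [harg] at h
    have h0 := hcap _ hmem1 hmem2
    linear_combination h0
  -- explicit action of eta
  have heta_rr : ∀ m k : ZMod n, (eta (r m) : Equiv.Perm (DihedralGroup n)) (r k)
      = r (m + k) := by
    intro m k
    rw [heta_app, hc, hcr, r_mul_r]
    congr 1; ring
  have heta_rs : ∀ m i : ZMod n, (eta (r m) : Equiv.Perm (DihedralGroup n)) (sr i)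
      = sr (i - a * m) := by
    intro m i
    rw [heta_app, hd, hcr, hdr, r_mul_sr]
    congr 1; ring
  have heta_sr : ∀ m k : ZMod n, (eta (sr m) : Equiv.Perm (DihedralGroup n)) (r k)
      = sr (m + a * k) := by
    intro m k
    rw [heta_app, hc, hcs, sr_mul_r]
  have heta_ss : ∀ m i : ZMod n, (eta (sr m) : Equiv.Perm (DihedralGroup n)) (sr i)
      = r (a * i - a * m) := by
    intro m i
    rw [heta_app, hd, hcs, hds, sr_mul_sr]
    congr 1; ring
  -- the holomorph normalizes M
  have hHolconj : ∀ f ∈ Hol (DihedralGroup n), ∀ p ∈ M, f * p * f⁻¹ ∈ M := by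
    intro f hf p hp
    set x : DihedralGroup n := f 1 with hx
    set psi : Equiv.Perm (DihedralGroup n) := (lam x)⁻¹ * f with hpsi
    have hpsiHol : psi ∈ Hol (DihedralGroup n) :=
      mul_mem (inv_mem (lamG_le_Hol (lam_mem x))) hf
    have hpsi1 : psi 1 = 1 := by
      rw [hpsi]
      simp only [Equiv.Perm.mul_apply, lam_inv_apply, ← hx]
      rw [inv_mul_cancel]
    obtain ⟨cp, dp, hcp, hdp⟩ := mul_perm_form hn hodd (hol_fix_one_mul hpsiHol hpsi1)
    have hkey : ∀ g, psi * (eta g : Equiv.Perm (DihedralGroup n)) =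
        (eta (psi g) : Equiv.Perm (DihedralGroup n)) * psi := by
      intro g
      ext z
      simp only [Equiv.Perm.mul_apply]
      rcases g with m | m <;> rcases z with k | k <;>
        simp only [heta_rr, heta_rs, heta_sr, heta_ss, hcp, hdp] <;>
        exact congrArg _ (by ring)
    have hpg : p = (eta (p 1) : Equiv.Perm (DihedralGroup n)) := heta_uniq p hp
    have hconj : psi * p * psi⁻¹ = (eta (psi (p 1)) : Equiv.Perm (DihedralGroup n)) := by
      conv_lhs => rw [hpg]
      rw [hkey (p 1), mul_inv_cancel_right]
    have hfdec : f * p * f⁻¹ = lam x * (psi * p * psi⁻¹) * (lam x)⁻¹ := by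
      have hfψ : f = lam x * psi := by rw [hpsi]; group
      rw [hfψ]; group
    rw [hfdec, hconj]
    exact (Subgroup.mem_normalizer_iff.mp (hlam x) _).mp (eta _).2
  have hHolLe : Hol (DihedralGroup n) ≤ Subgroup.normalizer (M : Set (Equiv.Perm (DihedralGroup n))) := by
    intro f hf
    rw [Subgroup.mem_normalizer_iff]
    intro h
    constructor
    · exact fun hh => hHolconj f hf h hh
    · intro hh
      have h1 := hHolconj f⁻¹ (inv_mem hf) _ hh
      have h2 : f⁻¹ * (f * h * f⁻¹) * f⁻¹⁻¹ = h := by group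
      rwa [h2] at h1
  -- counting
  haveI : Finite (MulAut ↥M) :=
    Finite.of_injective (fun φ : MulAut ↥M => (φ : ↥M → ↥M)) DFunLike.coe_injective
  haveI : Finite (MulAut (DihedralGroup n)) :=
    Finite.of_injective
      (fun φ : MulAut (DihedralGroup n) => (φ : DihedralGroup n → DihedralGroup n))
      DFunLike.coe_injective
  have hcard1 : Nat.card ↥(Subgroup.normalizer (M : Set (Equiv.Perm (DihedralGroup n)))) ≤ Nat.card (DihedralGroup n × MulAut ↥M) := by
    have hmemn : ∀ f : ↥(Subgroup.normalizer (M : Set (Equiv.Perm (DihedralGroup n)))), (f : Equiv.Perm (DihedralGroup n)) ∈ Subgroup.normalizer (M : Set (Equiv.Perm (DihedralGroup n))) :=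
      fun f => f.2
    refine Nat.card_le_card_of_injective
      (fun f => (((f : Equiv.Perm (DihedralGroup n))) 1,
        conjAut (f : Equiv.Perm (DihedralGroup n)) f.2)) ?_
    intro f f' hff
    have h1 : (f : Equiv.Perm (DihedralGroup n)) 1 = (f' : Equiv.Perm (DihedralGroup n)) 1 :=
      (Prod.ext_iff.mp hff).1
    have h2 := (Prod.ext_iff.mp hff).2
    set F : Equiv.Perm (DihedralGroup n) := (f : Equiv.Perm (DihedralGroup n)) with hF
    set F' : Equiv.Perm (DihedralGroup n) := (f' : Equiv.Perm (DihedralGroup n)) with hF'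
    have hconjeq : ∀ p : ↥M, F * (p : Equiv.Perm (DihedralGroup n)) * F⁻¹
        = F' * (p : Equiv.Perm (DihedralGroup n)) * F'⁻¹ := by
      intro p
      have := DFunLike.congr_fun h2 p
      exact congrArg Subtype.val this
    set th : Equiv.Perm (DihedralGroup n) := F'⁻¹ * F with hth
    have hth1 : th 1 = 1 := by
      rw [hth]
      have : F'⁻¹ (F 1) = F'⁻¹ (F' 1) := by rw [h1]
      simpa using this
    have hthcomm : ∀ p : ↥M, th * (p : Equiv.Perm (DihedralGroup n))
        = (p : Equiv.Perm (DihedralGroup n)) * th := by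
      intro p
      have e := hconjeq p
      calc th * (p : Equiv.Perm (DihedralGroup n))
          = F'⁻¹ * (F * (p : Equiv.Perm (DihedralGroup n)) * F⁻¹) * F := by rw [hth]; group
        _ = F'⁻¹ * (F' * (p : Equiv.Perm (DihedralGroup n)) * F'⁻¹) * F := by rw [e]
        _ = (p : Equiv.Perm (DihedralGroup n)) * th := by rw [hth]; group
    have hthid : ∀ z, th z = z := by
      intro z
      have he := Equiv.ext_iff.mp (hthcomm (eta z)) 1
      simp only [Equiv.Perm.mul_apply] at he
      rw [heta z, hth1, heta z] at he
      exact he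
    have hth_one : th = 1 := Equiv.ext hthid
    have : F = F' := by
      have := hth_one
      rw [hth] at this
      exact (inv_mul_eq_one.mp this).symm ▸ rfl
    exact Subtype.ext this
  have hcard2 : Nat.card (DihedralGroup n × MulAut ↥M)
      = Nat.card (DihedralGroup n × MulAut (DihedralGroup n)) :=
    Nat.card_congr (Equiv.prodCongr (Equiv.refl _) (mulAutCongr hiso.some))
  have hcard3 : Nat.card (DihedralGroup n × MulAut (DihedralGroup n))
      ≤ Nat.card ↥(Hol (DihedralGroup n)) := by
    refine Nat.card_le_card_of_injective
      (fun gφ => (⟨lam gφ.1 * (gφ.2 : Equiv.Perm (DihedralGroup n)),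
        mul_mem (lamG_le_Hol (lam_mem gφ.1)) (aut_perm_mem_Hol gφ.2)⟩ :
          ↥(Hol (DihedralGroup n)))) ?_
    rintro ⟨g, φ⟩ ⟨g', φ'⟩ h
    have hval : lam g * (φ : Equiv.Perm (DihedralGroup n))
        = lam g' * (φ' : Equiv.Perm (DihedralGroup n)) := congrArg Subtype.val h
    have h1 := Equiv.ext_iff.mp hval 1
    simp only [Equiv.Perm.mul_apply, lam_apply] at h1
    have hφ1 : (φ : Equiv.Perm (DihedralGroup n)) 1 = 1 := map_one φ
    have hφ'1 : (φ' : Equiv.Perm (DihedralGroup n)) 1 = 1 := map_one φ'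
    rw [hφ1, hφ'1, mul_one, mul_one] at h1
    subst h1
    have h2 : (φ : Equiv.Perm (DihedralGroup n)) = (φ' : Equiv.Perm (DihedralGroup n)) :=
      mul_left_cancel hval
    have h3 : φ = φ' := by
      ext z
      exact Equiv.ext_iff.mp h2 z
    rw [h3]
  have hcard : Nat.card ↥(Subgroup.normalizer (M : Set (Equiv.Perm (DihedralGroup n)))) ≤ Nat.card ↥(Hol (DihedralGroup n)) :=
    hcard1.trans (hcard2 ▸ hcard3)
  exact (Subgroup.eq_of_le_of_card_ge hHolLe hcard).symm

end QHAux

/-- For `n ≥ 3` odd and `G = Dₙ` the dihedral group of order `2n`, `Q(G) = H(G)`. -/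
theorem QClass_eq_HClass_dihedral (n : ℕ) (hn : 3 ≤ n) (hodd : Odd n) :
    QClass (DihedralGroup n) = HClass (DihedralGroup n) := by
  ext M
  simp only [QClass, HClass, SClass, RClass, Set.mem_setOf_eq, Set.mem_inter_iff,
    Set.mem_sep_iff]
  constructor
  · rintro ⟨⟨⟨hreg, hiso, hle⟩, ⟨-, -, hlamnorm⟩⟩, hQ⟩
    have hρiso : Nonempty (↥(QHAux.rho (n := n)).range ≃* DihedralGroup n) :=
      ⟨(MonoidHom.ofInjective QHAux.rho_injective).symm⟩
    have hρmem : (QHAux.rho (n := n)).range ∈ SClass (DihedralGroup n) ∩ RClass (DihedralGroup n) :=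
      ⟨⟨QHAux.rho_range_regular, hρiso, QHAux.rho_range_le_Hol⟩,
       ⟨QHAux.rho_range_regular, hρiso, QHAux.lamG_le_norm_rho_range⟩⟩
    have hρ := hQ _ ⟨hρmem.1, hρmem.2⟩
    exact ⟨hreg, hiso, QHAux.main_norm_eq hn hodd M hreg hiso hle
      (fun g => hlamnorm (QHAux.lam_mem g)) (fun u => hρ ⟨u, rfl⟩)⟩
  · rintro ⟨hreg, hiso, hnorm⟩
    refine ⟨⟨⟨hreg, hiso, ?_⟩, ⟨hreg, hiso, ?_⟩⟩, ?_⟩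
    · rw [← hnorm]; exact Subgroup.le_normalizer
    · rw [hnorm]; exact QHAux.lamG_le_Hol
    · intro N hN
      rw [hnorm]
      exact hN.1.2.2
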